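/- If every codeword of the extended code C_ex has Hamming weight divisible by 4, then C contains no only-odd-decomposable codeword. -/
import Mathlib


open Finset

/-- Support of a binary vector: the set of nonzero coordinates. -/
def supp {n : ℕ} (v : Fin n → ZMod 2) : Finset (Fin n) :=
  Finset.univ.filter fun i => v i ≠ 0

/-- Hamming weight. -/
def wt {n : ℕ} (v : Fin n → ZMod 2) : ℕ := (supp v).card

/-- A nonzero codeword of `D` is a zero neighbor (minimal codeword) if no nonzero
codeword of `D` has support strictly contained in its support. -/
def IsZeroNeighbor {n : ℕ} (D : Set (Fin n → ZMod 2)) (v : Fin n → ZMod 2) : Prop :=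
  v ∈ D ∧ v ≠ 0 ∧ ∀ v' ∈ D, v' ≠ 0 → ¬ supp v' ⊂ supp v

/-- `v` is decomposable in `D` if it is the sum of two nonzero codewords of `D`
with disjoint supports. -/
def Decomposable {n : ℕ} (D : Set (Fin n → ZMod 2)) (v : Fin n → ZMod 2) : Prop :=
  ∃ v1 v2, v1 ∈ D ∧ v2 ∈ D ∧ v1 ≠ 0 ∧ v2 ≠ 0 ∧
    Disjoint (supp v1) (supp v2) ∧ v = v1 + v2

/-- Extension of a vector by its overall parity bit. -/
def extVec {n : ℕ} (v : Fin n → ZMod 2) : Fin (n + 1) → ZMod 2 :=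
  Fin.snoc v (∑ i, v i)

/-- The extended code. -/
def extCode {n : ℕ} (C : Submodule (ZMod 2) (Fin n → ZMod 2)) :
    Set (Fin (n + 1) → ZMod 2) :=
  extVec '' (C : Set (Fin n → ZMod 2))

/-- An even-weight codeword is only-odd-decomposable if it is decomposable and in every
decomposition into nonzero disjoint-support codewords both parts have odd weight. -/
def OnlyOddDecomposable {n : ℕ} (C : Submodule (ZMod 2) (Fin n → ZMod 2))
    (v : Fin n → ZMod 2) : Prop :=
  Even (wt v) ∧ Decomposable (C : Set (Fin n → ZMod 2)) v ∧
    ∀ v1 v2, v1 ∈ C → v2 ∈ C → v1 ≠ 0 → v2 ≠ 0 →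
      Disjoint (supp v1) (supp v2) → v = v1 + v2 → Odd (wt v1) ∧ Odd (wt v2)

/-- `L_w(D)`: the number of zero neighbors of weight `w` in `D`. -/
noncomputable def Lw {n : ℕ} (D : Set (Fin n → ZMod 2)) (w : ℕ) : ℕ :=
  {v : Fin n → ZMod 2 | IsZeroNeighbor D v ∧ wt v = w}.ncard

/-- `N_w(C)`: the number of only-odd-decomposable codewords of weight `w` in `C`. -/
noncomputable def Nw {n : ℕ} (C : Submodule (ZMod 2) (Fin n → ZMod 2)) (w : ℕ) : ℕ :=
  {v : Fin n → ZMod 2 | v ∈ C ∧ OnlyOddDecomposable C v ∧ wt v = w}.ncard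

/-- Action of a coordinate permutation on a vector. -/
def permVec {n : ℕ} (π : Equiv.Perm (Fin n)) (v : Fin n → ZMod 2) : Fin n → ZMod 2 :=
  v ∘ π.symm

/-- `π` is an automorphism of the code `D`. -/
def IsAut {n : ℕ} (D : Set (Fin n → ZMod 2)) (π : Equiv.Perm (Fin n)) : Prop :=
  permVec π '' D = D

/-- The even weight subcode of `C`, as a set. -/
def evenSub {n : ℕ} (C : Submodule (ZMod 2) (Fin n → ZMod 2)) :
    Set (Fin n → ZMod 2) :=
  {v : Fin n → ZMod 2 | v ∈ C ∧ Even (wt v)}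

lemma wt_eq_sum {n : ℕ} (v : Fin n → ZMod 2) :
    wt v = ∑ i, if v i ≠ 0 then 1 else 0 := by
  simp [wt, supp, Finset.card_filter]

lemma sum_eq_wt {n : ℕ} (v : Fin n → ZMod 2) :
    ∑ i, v i = (wt v : ZMod 2) := by
  have key : ∀ a : ZMod 2, a = (if a ≠ 0 then (1 : ZMod 2) else 0) := by decide
  rw [wt_eq_sum]
  push_cast
  refine Finset.sum_congr rfl fun i _ => ?_
  rw [key (v i)]
  split <;> simp

lemma wt_ext {n : ℕ} (v : Fin n → ZMod 2) :
    wt (extVec v) = wt v + if Odd (wt v) then 1 else 0 := by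
  rw [wt_eq_sum, Fin.sum_univ_castSucc]
  have h1 : ∀ i : Fin n, extVec v i.castSucc = v i := fun i => Fin.snoc_castSucc _ _ _
  have h2 : extVec v (Fin.last n) = ∑ i, v i := Fin.snoc_last _ _
  simp only [h1, h2, sum_eq_wt]
  rw [← wt_eq_sum]
  congr 1
  have : (wt v : ZMod 2) ≠ 0 ↔ Odd (wt v) := by
    rw [Ne, ZMod.natCast_eq_zero_iff, Nat.odd_iff, Nat.two_dvd_ne_zero]
  split <;> split <;> simp_all

lemma supp_add_of_disjoint {n : ℕ} {v1 v2 : Fin n → ZMod 2}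
    (h : Disjoint (supp v1) (supp v2)) :
    supp (v1 + v2) = supp v1 ∪ supp v2 := by
  ext i
  simp only [supp, Finset.mem_filter, Finset.mem_union, Finset.mem_univ, true_and,
    Pi.add_apply]
  have hdis : v1 i = 0 ∨ v2 i = 0 := by
    by_contra hc
    push_neg at hc
    exact Finset.disjoint_left.mp h
      (Finset.mem_filter.mpr ⟨Finset.mem_univ i, hc.1⟩)
      (Finset.mem_filter.mpr ⟨Finset.mem_univ i, hc.2⟩)
  have key : ∀ a b : ZMod 2, (a = 0 ∨ b = 0) → (a + b ≠ 0 ↔ a ≠ 0 ∨ b ≠ 0) := by decide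
  exact key _ _ hdis

theorem no_only_odd_decomposable_of_doubly_even {n : ℕ}
    (C : Submodule (ZMod 2) (Fin n → ZMod 2))
    (h4 : ∀ w ∈ extCode C, 4 ∣ wt w) :
    ∀ v ∈ C, ¬ OnlyOddDecomposable C v := by
  intro v hv hodd
  obtain ⟨hev, ⟨v1, v2, h1, h2, hn1, hn2, hdis, hsum⟩, hall⟩ := hodd
  obtain ⟨ho1, ho2⟩ := hall v1 v2 h1 h2 hn1 hn2 hdis hsum
  have hw : wt v = wt v1 + wt v2 := by
    rw [hsum, wt, supp_add_of_disjoint hdis, Finset.card_union_of_disjoint hdis]; rfl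
  have hv4 := h4 _ ⟨v, hv, rfl⟩
  have h14 := h4 _ ⟨v1, h1, rfl⟩
  have h24 := h4 _ ⟨v2, h2, rfl⟩
  rw [wt_ext, if_neg (Nat.not_odd_iff_even.mpr hev)] at hv4
  rw [wt_ext, if_pos ho1] at h14
  rw [wt_ext, if_pos ho2] at h24
  obtain ⟨a, ha⟩ := ho1
  obtain ⟨b, hb⟩ := ho2
  omega
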